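/- The equilibrium point (0,0) of the planar system du/dτ = u(u+C)((u+A)(1-u)(u-M) - Qv), dv/dτ = S(u+A)(u - v + C)v with strong Allee effect is a saddle point: the Jacobian of the vector field at (0,0) has determinant -A²C²MS < 0. -/

import Mathlib

open Matrix

/-- Jacobian matrix (via partial derivatives) of the vector field
`F(u,v) = (u(u+C)((u+A)(1-u)(u-M) - Qv), S(u+A)(u-v+C)v)` at the point `(a,b)`. -/
noncomputable def jac (A C M Q S a b : ℝ) : Matrix (Fin 2) (Fin 2) ℝ :=
  !![deriv (fun u => u * (u + C) * ((u + A) * (1 - u) * (u - M) - Q * b)) a,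
     deriv (fun v => a * (a + C) * ((a + A) * (1 - a) * (a - M) - Q * v)) b;
     deriv (fun u => S * (u + A) * (u - b + C) * b) a,
     deriv (fun v => S * (a + A) * (a - v + C) * v) b]

private lemma d11 (A C M Q : ℝ) :
    HasDerivAt (fun u : ℝ => u * (u + C) * ((u + A) * (1 - u) * (u - M) - Q * 0))
      (-(A * C * M)) 0 := by
  have h := ((hasDerivAt_id (0:ℝ)).mul ((hasDerivAt_id (0:ℝ)).add_const C)).mul
    (((((hasDerivAt_id (0:ℝ)).add_const A).mul ((hasDerivAt_const (0:ℝ) 1).sub (hasDerivAt_id 0))).mul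
      ((hasDerivAt_id (0:ℝ)).sub_const M)).sub_const (Q * 0))
  refine h.congr_deriv ?_
  simp; ring

private lemma d12 (A C M Q : ℝ) :
    HasDerivAt (fun v : ℝ => (0:ℝ) * (0 + C) * ((0 + A) * (1 - 0) * (0 - M) - Q * v)) 0 0 := by
  have h : (fun v : ℝ => (0:ℝ) * (0 + C) * ((0 + A) * (1 - 0) * (0 - M) - Q * v))
      = fun _ => (0:ℝ) := by funext v; ring
  rw [h]; exact hasDerivAt_const 0 0

private lemma d21 (A C S b : ℝ) :
    HasDerivAt (fun u : ℝ => S * (u + A) * (u - (0:ℝ) + C) * 0) 0 0 := by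
  have h : (fun u : ℝ => S * (u + A) * (u - (0:ℝ) + C) * 0) = fun _ => (0:ℝ) := by
    funext u; ring
  rw [h]; exact hasDerivAt_const 0 0

private lemma d22 (A C S : ℝ) :
    HasDerivAt (fun v : ℝ => S * ((0:ℝ) + A) * (0 - v + C) * v) (S * A * C) 0 := by
  have h := ((hasDerivAt_const (0:ℝ) (S * ((0:ℝ) + A))).mul
    (((hasDerivAt_const (0:ℝ) 0).sub (hasDerivAt_id 0)).add_const C)).mul (hasDerivAt_id 0)
  simp only [id] at h
  refine h.congr_deriv ?_
  simp

/-- The equilibrium `(0,0)` is a saddle point in the strong Allee effect case: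
the Jacobian there has determinant `-A²C²MS < 0`. -/
theorem stmt0 (A C M Q S : ℝ) (hA : 0 < A) (hA1 : A < 1) (hC : 0 < C)
    (hS : 0 < S) (hQ : 0 < Q) (hM : 0 < M) (hM1 : M < 1) :
    (jac A C M Q S 0 0).det = -A ^ 2 * C ^ 2 * M * S ∧
      -A ^ 2 * C ^ 2 * M * S < 0 := by
  constructor
  · rw [jac, Matrix.det_fin_two_of, (d11 A C M Q).deriv, (d12 A C M Q).deriv,
      (d21 A C S 0).deriv, (d22 A C S).deriv]
    ring
  · have : 0 < A ^ 2 * C ^ 2 * M * S := by positivity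
    linarith
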